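/- arXiv:1207.6260 — 4 statements merged into one kernel-verified Lean document; each statement's English description precedes it below -/
import Mathlib

section
/- Let H be a distribution on functions from {0,1}^n to {0,1}^m, X a distribution over {0,1}^n, and U uniform over {0,1}^m. Then the statistical distance between (H, H(X)) and (H, U) is at most (1/2)·sqrt(2^m · Pr_{H,X,X'}[H(X)=H(X')] − 1), where X' is an independent copy of X. -/
open Finset

/-- Statistical distance between two distributions (given as real-valued mass
functions) on a finite type: half the ℓ₁ distance. -/
noncomputable def statDist {α : Type*} [Fintype α] (f g : α → ℝ) : ℝ :=
  (∑ a, |f a - g a|) / 2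

/-- `f` is a probability distribution on the finite type `α`. -/
def IsDist {α : Type*} [Fintype α] (f : α → ℝ) : Prop :=
  (∀ a, 0 ≤ f a) ∧ ∑ a, f a = 1

/-- Collision probability vs statistical distance: for a distribution `μ` on
functions `h : {0,1}^n → {0,1}^m` and a distribution `ν` on inputs, the
statistical distance between `(H, H(X))` and `(H, U)` is at most
`(1/2)·√(2^m · Pr[H(X) = H(X')] − 1)`. -/
theorem stmt0 (n m : ℕ)
    (μ : ((Fin n → Bool) → (Fin m → Bool)) → ℝ) (ν : (Fin n → Bool) → ℝ)
    (hμ : IsDist μ) (hν : IsDist ν) :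
    statDist
      (fun q : ((Fin n → Bool) → (Fin m → Bool)) × (Fin m → Bool) =>
        μ q.1 * ∑ x, if q.1 x = q.2 then ν x else 0)
      (fun q => μ q.1 * ((2 : ℝ) ^ m)⁻¹)
    ≤ (1 / 2) * Real.sqrt ((2 : ℝ) ^ m *
        (∑ h, ∑ x, ∑ x', if h x = h x' then μ h * ν x * ν x' else 0) - 1) := by
  classical
  obtain ⟨hμ0, hμ1⟩ := hμ
  obtain ⟨hν0, hν1⟩ := hν
  set N : ℝ := (2:ℝ) ^ m with hN
  have hNpos : (0:ℝ) < N := by positivity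
  set f : ((Fin n → Bool) → (Fin m → Bool)) → (Fin m → Bool) → ℝ :=
    fun h y => ∑ x, if h x = y then ν x else 0 with hf
  have hcard : ((Fintype.card (Fin m → Bool) : ℝ)) = N := by
    simp [hN]
  have hfsum : ∀ h, ∑ y, f h y = 1 := by
    intro h
    rw [hf]
    simp only
    rw [Finset.sum_comm]
    simp [hν1]
  -- square sum identity
  have hfsq : ∀ h, ∑ y, (f h y)^2
      = ∑ x, ∑ x', if h x = h x' then ν x * ν x' else 0 := by
    intro h
    simp only [hf, sq, Finset.sum_mul_sum]
    rw [Finset.sum_comm]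
    congr 1; ext x
    rw [Finset.sum_comm]
    congr 1; ext x'
    simp only [ite_mul, mul_ite, mul_zero, zero_mul]
    simp [Finset.sum_ite_eq', eq_comm]
  -- expanding the square
  have hdiff : ∀ h, ∑ y, (f h y - N⁻¹)^2 = (∑ y, (f h y)^2) - N⁻¹ := by
    intro h
    have e : ∀ y, (f h y - N⁻¹)^2 = (f h y)^2 - 2*N⁻¹ * f h y + N⁻¹^2 := by
      intro y; ring
    rw [Finset.sum_congr rfl (fun y _ => e y), Finset.sum_add_distrib,
      Finset.sum_sub_distrib, ← Finset.mul_sum, hfsum, Finset.sum_const,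
      Finset.card_univ, nsmul_eq_mul, hcard]
    have : N * N⁻¹^2 = N⁻¹ := by
      field_simp
    rw [this]; ring
  set a : ((Fin n → Bool) → (Fin m → Bool)) → ℝ :=
    fun h => N * (∑ y, (f h y)^2) - 1 with ha
  have ha0 : ∀ h, 0 ≤ a h := by
    intro h
    have : a h = N * ∑ y, (f h y - N⁻¹)^2 := by
      rw [hdiff h]; field_simp [ha]; ring
    rw [this]
    positivity
  -- per-h Cauchy-Schwarz
  have hCS1 : ∀ h, ∑ y, |f h y - N⁻¹| ≤ Real.sqrt (a h) := by
    intro h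
    have cs := Finset.sum_mul_sq_le_sq_mul_sq Finset.univ
      (fun _ : (Fin m → Bool) => (1:ℝ)) (fun y => |f h y - N⁻¹|)
    simp only [one_mul, one_pow, sq_abs, Finset.sum_const, Finset.card_univ,
      nsmul_eq_mul, mul_one] at cs
    rw [hcard] at cs
    have hsq : (∑ y, |f h y - N⁻¹|)^2 ≤ a h := by
      refine cs.trans ?_
      rw [hdiff h]
      rw [ha]
      have : N * ((∑ y, (f h y)^2) - N⁻¹) = N * (∑ y, (f h y)^2) - 1 := by
        field_simp
      rw [this]
    have hnn : 0 ≤ ∑ y, |f h y - N⁻¹| := Finset.sum_nonneg fun y _ => abs_nonneg _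
    calc ∑ y, |f h y - N⁻¹| = Real.sqrt ((∑ y, |f h y - N⁻¹|)^2) := by
          rw [Real.sqrt_sq hnn]
      _ ≤ Real.sqrt (a h) := Real.sqrt_le_sqrt hsq
  -- Jensen / Cauchy-Schwarz over h
  have hCS2 : ∑ h, μ h * Real.sqrt (a h) ≤ Real.sqrt (∑ h, μ h * a h) := by
    have e : ∀ h, μ h * Real.sqrt (a h)
        = Real.sqrt (μ h) * Real.sqrt (μ h * a h) := by
      intro h
      rw [Real.sqrt_mul (hμ0 h), ← mul_assoc, Real.mul_self_sqrt (hμ0 h)]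
    rw [Finset.sum_congr rfl (fun h _ => e h)]
    have cs := Finset.sum_mul_sq_le_sq_mul_sq Finset.univ
      (fun h => Real.sqrt (μ h)) (fun h => Real.sqrt (μ h * a h))
    simp only [Real.sq_sqrt (hμ0 _)] at cs
    have e2 : ∀ h : ((Fin n → Bool) → (Fin m → Bool)),
        Real.sqrt (μ h * a h) ^ 2 = μ h * a h := by
      intro h; exact Real.sq_sqrt (mul_nonneg (hμ0 h) (ha0 h))
    rw [Finset.sum_congr rfl (fun h _ => e2 h), hμ1, one_mul] at cs
    have hnn : 0 ≤ ∑ h, Real.sqrt (μ h) * Real.sqrt (μ h * a h) :=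
      Finset.sum_nonneg fun h _ => mul_nonneg (Real.sqrt_nonneg _) (Real.sqrt_nonneg _)
    calc ∑ h, Real.sqrt (μ h) * Real.sqrt (μ h * a h)
        = Real.sqrt ((∑ h, Real.sqrt (μ h) * Real.sqrt (μ h * a h))^2) := by
          rw [Real.sqrt_sq hnn]
      _ ≤ Real.sqrt (∑ h, μ h * a h) := Real.sqrt_le_sqrt cs
  -- identify ∑ μ a with the collision expression
  have hid : ∑ h, μ h * a h
      = N * (∑ h, ∑ x, ∑ x', if h x = h x' then μ h * ν x * ν x' else 0) - 1 := by
    have e : ∀ h, μ h * a h = N * (μ h * ∑ y, (f h y)^2) - μ h := by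
      intro h; rw [ha]; ring
    rw [Finset.sum_congr rfl (fun h _ => e h), Finset.sum_sub_distrib, hμ1,
      ← Finset.mul_sum]
    congr 2
    refine Finset.sum_congr rfl fun h _ => ?_
    rw [hfsq h, Finset.mul_sum]
    refine Finset.sum_congr rfl fun x _ => ?_
    rw [Finset.mul_sum]
    refine Finset.sum_congr rfl fun x' _ => ?_
    simp only [mul_ite, mul_zero, mul_assoc]
  -- assemble
  have hL : statDist
      (fun q : ((Fin n → Bool) → (Fin m → Bool)) × (Fin m → Bool) =>
        μ q.1 * ∑ x, if q.1 x = q.2 then ν x else 0)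
      (fun q => μ q.1 * ((2 : ℝ) ^ m)⁻¹)
      = (∑ h, μ h * ∑ y, |f h y - N⁻¹|) / 2 := by
    rw [statDist, Fintype.sum_prod_type]
    congr 1
    refine Finset.sum_congr rfl fun h _ => ?_
    rw [Finset.mul_sum]
    refine Finset.sum_congr rfl fun y _ => ?_
    rw [← mul_sub, abs_mul, abs_of_nonneg (hμ0 h)]
  rw [hL, hid.symm, div_le_iff₀ (by norm_num : (0:ℝ) < 2)] at *
  calc (∑ h, μ h * ∑ y, |f h y - N⁻¹|)
      ≤ ∑ h, μ h * Real.sqrt (a h) :=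
        Finset.sum_le_sum fun h _ => mul_le_mul_of_nonneg_left (hCS1 h) (hμ0 h)
    _ ≤ Real.sqrt (∑ h, μ h * a h) := hCS2
    _ = 1 / 2 * Real.sqrt (∑ h, μ h * a h) * 2 := by ring
end

section
/- Let S ⊆ {0,1}^n with |S| = 2^k, let p ∈ (0,1/2), and let i ≥ 1 and B ≥ 1 be real. Then E_{y∼S}[(1−2p)^{i|y|}] ≤ ((1 + (1−2p)^{Bi})^n / |S|)^{1/B}, where y is uniform on S and |y| is Hamming weight. -/
open Finset

/-- Hamming weight of a Boolean vector. -/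
def wtB {n : ℕ} (y : Fin n → Bool) : ℕ := (univ.filter (fun i => y i)).card

lemma sum_all (n : ℕ) (c : ℝ) (hc : 0 ≤ c) (e : ℝ) :
    ∑ y : Fin n → Bool, c ^ (e * (wtB y : ℝ)) = (1 + c ^ e) ^ n := by
  have key : ∀ y : Fin n → Bool, c ^ (e * (wtB y : ℝ)) =
      ∏ j : Fin n, (if y j then c ^ e else 1) := by
    intro y
    rw [Real.rpow_mul hc, Real.rpow_natCast, wtB, ← Finset.prod_const,
      Finset.prod_filter]
  simp_rw [key]
  rw [← Fintype.prod_sum (fun (_ : Fin n) (b : Bool) => if b then c ^ e else 1)]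
  simp [add_comm]

/-- Hölder bound: for `S ⊆ {0,1}^n` of size `2^k`, `p ∈ (0,1/2)` and real
`i ≥ 1`, `B ≥ 1`,
`E_{y∼S}[(1−2p)^{i|y|}] ≤ ((1+(1−2p)^{Bi})^n / |S|)^{1/B}`. -/
theorem stmt4 (n k : ℕ) (S : Finset (Fin n → Bool)) (hS : S.card = 2 ^ k)
    (p : ℝ) (hp : p ∈ Set.Ioo (0:ℝ) (1/2)) (i B : ℝ) (hi : 1 ≤ i) (hB : 1 ≤ B) :
    (S.card : ℝ)⁻¹ * ∑ y ∈ S, (1 - 2*p) ^ (i * (wtB y : ℝ)) ≤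
      ((1 + (1 - 2*p) ^ (B * i)) ^ n / (S.card : ℝ)) ^ (1/B) := by
  set c : ℝ := 1 - 2*p with hc
  have hc0 : 0 ≤ c := by simp only [hc]; nlinarith [hp.2]
  have hScard : (0:ℝ) < S.card := by
    rw [hS]; positivity
  -- step 1: power mean
  have h1 : ∑ y ∈ S, (S.card : ℝ)⁻¹ * c ^ (i * (wtB y : ℝ)) ≤
      (∑ y ∈ S, (S.card : ℝ)⁻¹ * (c ^ (i * (wtB y : ℝ))) ^ B) ^ (1/B) := by
    apply Real.arith_mean_le_rpow_mean S _ _ (fun _ _ => by positivity)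
      (by rw [Finset.sum_const, nsmul_eq_mul, mul_inv_cancel₀ hScard.ne'])
      (fun y _ => by positivity) hB
  rw [Finset.mul_sum]
  refine h1.trans ?_
  -- step 2: bound inner sum
  have h2 : ∑ y ∈ S, (S.card : ℝ)⁻¹ * (c ^ (i * (wtB y : ℝ))) ^ B ≤
      (1 + c ^ (B * i)) ^ n / S.card := by
    rw [← Finset.mul_sum, div_eq_inv_mul]
    apply mul_le_mul_of_nonneg_left _ (by positivity)
    calc ∑ y ∈ S, (c ^ (i * (wtB y : ℝ))) ^ B
        = ∑ y ∈ S, c ^ ((B * i) * (wtB y : ℝ)) := by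
          refine Finset.sum_congr rfl fun y _ => ?_
          rw [← Real.rpow_mul hc0]
          ring_nf
      _ ≤ ∑ y : Fin n → Bool, c ^ ((B * i) * (wtB y : ℝ)) :=
          Finset.sum_le_sum_of_subset_of_nonneg (Finset.subset_univ S)
            (fun y _ _ => by positivity)
      _ = (1 + c ^ (B * i)) ^ n := sum_all n c hc0 (B * i)
  have hB0 : 0 ≤ 1/B := by positivity
  exact Real.rpow_le_rpow (Finset.sum_nonneg fun y _ => by positivity) h2 hB0
end

section
/- Let Z₁,…,Z_m be {0,1}-valued random variables that are a read-t family of independent random variables X₁,…,X_n (each Xᵢ affects at most t of the Z_j's), and let Z = Z₁+⋯+Z_m. Then for every ε > 0, Pr[Z ≥ E[Z] + εm] ≤ exp(−2ε²m/t). -/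
open Finset
open scoped Classical



lemma hoeffding_scalar {p : ℝ} (hp0 : 0 ≤ p) (hp1 : p ≤ 1) (s : ℝ) :
    1 - p + p * Real.exp s ≤ Real.exp (p * s + s ^ 2 / 8) := by
  set D : ℝ → ℝ := fun x => 1 - p + p * Real.exp x with hDdef
  have hD : ∀ x, 0 < D x := by
    intro x
    rcases eq_or_lt_of_le hp0 with h | h
    · simp [hDdef, ← h]
    · have : 0 < p * Real.exp x := mul_pos h (Real.exp_pos x)
      simp only [hDdef]; linarith
  set f : ℝ → ℝ := fun x => p * x + x ^ 2 / 8 - Real.log (D x) with hfdef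
  set f' : ℝ → ℝ := fun x => p + x / 4 - p * Real.exp x / D x with hf'def
  have hDd : ∀ x, HasDerivAt D (p * Real.exp x) x := by
    intro x
    exact ((Real.hasDerivAt_exp x).const_mul p).const_add (1 - p)
  have hfd : ∀ x, HasDerivAt f (f' x) x := by
    intro x
    have h1 : HasDerivAt (fun x : ℝ => p * x + x ^ 2 / 8) (p + 2 * x / 8) x := by
      have := ((hasDerivAt_id x).const_mul p).add
        ((hasDerivAt_pow 2 x).div_const 8)
      simpa [Pi.add_def] using this
    have h2 : HasDerivAt (fun x => Real.log (D x)) (p * Real.exp x / D x) x :=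
      (hDd x).log (hD x).ne'
    have := h1.sub h2
    refine this.congr_deriv ?_
    simp only [hf'def]; ring
  have hf'd : ∀ x, HasDerivAt f'
      (1 / 4 - (p * Real.exp x * D x - p * Real.exp x * (p * Real.exp x)) / (D x) ^ 2) x := by
    intro x
    have h1 : HasDerivAt (fun x : ℝ => p + x / 4) (1 / 4) x := by
      simpa using (hasDerivAt_id x).div_const (4:ℝ) |>.const_add p
    have h2 : HasDerivAt (fun x => p * Real.exp x / D x)
        ((p * Real.exp x * D x - p * Real.exp x * (p * Real.exp x)) / (D x) ^ 2) x := by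
      have := ((Real.hasDerivAt_exp x).const_mul p).div (hDd x) (hD x).ne'
      simpa [mul_comm, Pi.div_def] using this
    simpa [Pi.sub_def, hf'def] using h1.sub h2
  have hf''nonneg : ∀ x, 0 ≤ 1 / 4 -
      (p * Real.exp x * D x - p * Real.exp x * (p * Real.exp x)) / (D x) ^ 2 := by
    intro x
    set u := p * Real.exp x with hu
    have hu0 : 0 ≤ u := mul_nonneg hp0 (Real.exp_pos x).le
    have huD : u ≤ D x := by simp only [hDdef]; linarith
    have hD2 : (0:ℝ) < (D x) ^ 2 := pow_pos (hD x) 2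
    rw [sub_nonneg, div_le_iff₀ hD2]
    have key : ∀ a b : ℝ, a * b - a * a ≤ 1 / 4 * b ^ 2 := by
      intro a b; nlinarith [sq_nonneg (b - 2 * a)]
    exact key u (D x)
  have hmono : Monotone f' := by
    apply monotone_of_deriv_nonneg (fun x => (hf'd x).differentiableAt)
    intro x
    rw [(hf'd x).deriv]
    exact hf''nonneg x
  have hf'0 : f' 0 = 0 := by
    simp [hf'def, hDdef]
  have hdiff : Differentiable ℝ f := fun x => (hfd x).differentiableAt
  have hmonoIci : MonotoneOn f (Set.Ici 0) := by
    apply monotoneOn_of_deriv_nonneg (convex_Ici 0) hdiff.continuous.continuousOn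
      hdiff.differentiableOn
    intro x hx
    rw [(hfd x).deriv]
    rw [interior_Ici] at hx
    rw [← hf'0]
    exact hmono (le_of_lt hx)
  have hantIic : AntitoneOn f (Set.Iic 0) := by
    apply antitoneOn_of_deriv_nonpos (convex_Iic 0) hdiff.continuous.continuousOn
      hdiff.differentiableOn
    intro x hx
    rw [(hfd x).deriv]
    rw [interior_Iic] at hx
    rw [← hf'0]
    exact hmono (le_of_lt hx)
  have hf0 : f 0 = 0 := by simp [hfdef, hDdef]
  have hfs : 0 ≤ f s := by
    rcases le_total 0 s with h | h
    · have := hmonoIci (Set.self_mem_Ici) h h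
      rwa [hf0] at this
    · have := hantIic h (Set.self_mem_Iic) h
      rwa [hf0] at this
  have : Real.log (D s) ≤ p * s + s ^ 2 / 8 := by
    simp only [hfdef] at hfs; linarith
  calc D s = Real.exp (Real.log (D s)) := (Real.exp_log (hD s)).symm
    _ ≤ _ := Real.exp_le_exp.mpr this

lemma amgm_pad {ι : Type*} (T : Finset ι) (t : ℕ) (ht : 0 < t) (hT : T.card ≤ t)
    (u : ι → ℝ) (hu : ∀ j, 0 ≤ u j) :
    ∏ j ∈ T, u j ≤ (1 - T.card / t) + ∑ j ∈ T, u j ^ t / t := by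
  have htR : (0:ℝ) < t := Nat.cast_pos.mpr ht
  have hc1 : (T.card : ℝ) / t ≤ 1 := by
    rw [div_le_one htR]; exact_mod_cast hT
  set s : Finset (Option ι) := insert none (T.image some) with hs
  have hnone : none ∉ T.image some := by simp
  set w : Option ι → ℝ := fun o => o.elim (1 - T.card / t) (fun _ => (t:ℝ)⁻¹) with hw
  set z : Option ι → ℝ := fun o => o.elim 1 (fun j => u j ^ t) with hz
  have hsomeinj : Set.InjOn some (T : Set ι) := fun a _ b _ h => Option.some_injective _ h
  have hw0 : ∀ o ∈ s, 0 ≤ w o := by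
    rintro (_ | j) _
    · simpa [hw] using hc1
    · simp [hw, inv_nonneg, htR.le]
  have hw1 : ∑ o ∈ s, w o = 1 := by
    rw [hs, sum_insert hnone, sum_image hsomeinj]
    simp only [hw, Option.elim]
    rw [sum_const, nsmul_eq_mul]
    field_simp
    ring
  have hz0 : ∀ o ∈ s, 0 ≤ z o := by
    rintro (_ | j) _
    · simp [hz]
    · simp only [hz, Option.elim]; exact pow_nonneg (hu j) t
  have := Real.geom_mean_le_arith_mean_weighted s w z hw0 hw1 hz0
  rw [hs, prod_insert hnone, sum_insert hnone, prod_image hsomeinj, sum_image hsomeinj] at this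
  simp only [hw, hz, Option.elim] at this
  calc ∏ j ∈ T, u j = 1 ^ (1 - (T.card:ℝ) / t) * ∏ j ∈ T, (u j ^ t) ^ ((t:ℝ)⁻¹) := by
        rw [Real.one_rpow, one_mul]
        refine prod_congr rfl fun j _ => ?_
        rw [← Real.rpow_natCast (u j) t, ← Real.rpow_mul (hu j),
          mul_inv_cancel₀ htR.ne', Real.rpow_one]
    _ ≤ (1 - (T.card:ℝ)/t) * 1 + ∑ j ∈ T, (t:ℝ)⁻¹ * u j ^ t := this
    _ = (1 - T.card / t) + ∑ j ∈ T, u j ^ t / t := by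
        rw [mul_one]
        congr 1
        exact sum_congr rfl fun j _ => by rw [inv_mul_eq_div]

lemma holder_w {ι α : Type*} [Fintype α] (t : ℕ) (ht : 0 < t)
    (p : α → ℝ) (hp : ∀ x, 0 ≤ p x) (hp1 : ∑ x, p x = 1)
    (T : Finset ι) (hT : T.card ≤ t) (g : ι → α → ℝ) (hg : ∀ j x, 0 ≤ g j x) :
    ∑ x, p x * ∏ j ∈ T, g j x ≤ ∏ j ∈ T, (∑ x, p x * g j x ^ t) ^ ((t:ℝ)⁻¹) := by
  have htR : (0:ℝ) < t := Nat.cast_pos.mpr ht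
  set N : ι → ℝ := fun j => (∑ x, p x * g j x ^ t) ^ ((t:ℝ)⁻¹) with hN
  have hsum0 : ∀ j, 0 ≤ ∑ x, p x * g j x ^ t := fun j =>
    sum_nonneg fun x _ => mul_nonneg (hp x) (pow_nonneg (hg j x) t)
  by_cases hzero : ∃ j ∈ T, (∑ x, p x * g j x ^ t) = 0
  · obtain ⟨j₀, hj₀T, hj₀⟩ := hzero
    have hR : ∏ j ∈ T, N j = 0 := by
      apply prod_eq_zero hj₀T
      rw [hN]; simp only [hj₀]
      exact Real.zero_rpow (by positivity)
    have hL : ∑ x, p x * ∏ j ∈ T, g j x = 0 := by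
      apply sum_eq_zero
      intro x _
      have hterm : p x * g j₀ x ^ t = 0 :=
        (sum_eq_zero_iff_of_nonneg (fun x _ => mul_nonneg (hp x) (pow_nonneg (hg j₀ x) t))).1
          hj₀ x (mem_univ x)
      rcases mul_eq_zero.1 hterm with h | h
      · rw [h, zero_mul]
      · have : g j₀ x = 0 := pow_eq_zero_iff ht.ne' |>.1 h
        rw [prod_eq_zero hj₀T this, mul_zero]
    rw [hL, hR]
  · push_neg at hzero
    have hpos : ∀ j ∈ T, 0 < ∑ x, p x * g j x ^ t := fun j hj =>
      lt_of_le_of_ne (hsum0 j) (Ne.symm (hzero j hj))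
    have hNpos : ∀ j ∈ T, 0 < N j := fun j hj => Real.rpow_pos_of_pos (hpos j hj) _
    have hNt : ∀ j ∈ T, N j ^ t = ∑ x, p x * g j x ^ t := by
      intro j hj
      rw [hN, ← Real.rpow_natCast ((∑ x, p x * g j x ^ t) ^ ((t:ℝ)⁻¹)) t,
        ← Real.rpow_mul (hsum0 j), inv_mul_cancel₀ htR.ne', Real.rpow_one]
    have hNprodpos : 0 < ∏ j ∈ T, N j := prod_pos hNpos
    have key : ∀ x, ∏ j ∈ T, g j x ≤
        (∏ j ∈ T, N j) * ((1 - T.card / t) + ∑ j ∈ T, (g j x / N j) ^ t / t) := by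
      intro x
      have h1 : ∏ j ∈ T, g j x = (∏ j ∈ T, N j) * ∏ j ∈ T, (g j x / N j) := by
        rw [prod_div_distrib, mul_div_cancel₀ _ hNprodpos.ne']
      rw [h1]
      exact mul_le_mul_of_nonneg_left
        (amgm_pad T t ht hT _ (fun j => div_nonneg (hg j x) (Real.rpow_nonneg (hsum0 j) _)))
        hNprodpos.le
    have stepA : ∀ x, p x * ((∏ j ∈ T, N j) * ((1 - T.card / t) + ∑ j ∈ T, (g j x / N j) ^ t / t))
        = (∏ j ∈ T, N j) * (p x * (1 - T.card / t) + ∑ j ∈ T, p x * (g j x ^ t / (N j ^ t * t))) := by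
      intro x
      have h2 : ∀ j ∈ T, (g j x / N j) ^ t / (t:ℝ) = g j x ^ t / (N j ^ t * t) := by
        intro j _
        rw [div_pow, div_div]
      rw [sum_congr rfl h2, ← mul_sum]
      ring
    have stepC : ∀ j ∈ T, (∑ x, p x * g j x ^ t) / (N j ^ t * (t:ℝ)) = (t:ℝ)⁻¹ := by
      intro j hj
      rw [← hNt j hj, div_mul_eq_div_div, div_self (pow_pos (hNpos j hj) t).ne', one_div]
    calc ∑ x, p x * ∏ j ∈ T, g j x
        ≤ ∑ x, p x * ((∏ j ∈ T, N j) * ((1 - T.card / t) + ∑ j ∈ T, (g j x / N j) ^ t / t)) :=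
          sum_le_sum fun x _ => mul_le_mul_of_nonneg_left (key x) (hp x)
      _ = (∏ j ∈ T, N j) *
          (∑ x, (p x * (1 - T.card / t) + ∑ j ∈ T, p x * (g j x ^ t / (N j ^ t * t)))) := by
          rw [mul_sum]
          exact sum_congr rfl fun x _ => stepA x
      _ = ∏ j ∈ T, N j := by
          rw [sum_add_distrib, ← sum_mul, hp1, one_mul, sum_comm]
          have : ∀ j ∈ T, ∑ x, p x * (g j x ^ t / (N j ^ t * (t:ℝ))) = (t:ℝ)⁻¹ := by
            intro j hj
            simp only [← mul_div_assoc]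
            rw [← sum_div]
            exact stepC j hj
          rw [sum_congr rfl this, sum_const, nsmul_eq_mul]
          have : (1 - (T.card:ℝ) / t) + T.card * (t:ℝ)⁻¹ = 1 := by
            field_simp
            ring
          rw [this, mul_one]

section EE
variable {n : ℕ} {Ω : Fin n → Type} [∀ i, Fintype (Ω i)]

noncomputable def cwf (ν : ∀ i, Ω i → ℝ) (A : Finset (Fin n)) (ω : ∀ i, Ω i)
    (i : Fin n) (y : Ω i) : ℝ :=
  if i ∈ A then ν i y else if y = ω i then 1 else 0

noncomputable def EE (ν : ∀ i, Ω i → ℝ) (A : Finset (Fin n)) (f : (∀ i, Ω i) → ℝ)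
    (ω : ∀ i, Ω i) : ℝ :=
  ∑ σ : ∀ i, Ω i, (∏ i, cwf ν A ω i (σ i)) * f σ

variable {ν : ∀ i, Ω i → ℝ}

lemma cwf_nonneg (hν : ∀ i, (∀ a, 0 ≤ ν i a) ∧ ∑ a, ν i a = 1)
    (A : Finset (Fin n)) (ω : ∀ i, Ω i) (i : Fin n) (y : Ω i) : 0 ≤ cwf ν A ω i y := by
  unfold cwf
  split
  · exact (hν i).1 y
  · split <;> norm_num

lemma cw_nonneg (hν : ∀ i, (∀ a, 0 ≤ ν i a) ∧ ∑ a, ν i a = 1)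
    (A : Finset (Fin n)) (ω σ : ∀ i, Ω i) : 0 ≤ ∏ i, cwf ν A ω i (σ i) :=
  prod_nonneg fun i _ => cwf_nonneg hν A ω i (σ i)

lemma EE_empty (f : (∀ i, Ω i) → ℝ) (ω : ∀ i, Ω i) : EE ν ∅ f ω = f ω := by
  unfold EE
  rw [Fintype.sum_eq_single ω]
  · have : ∀ i, cwf ν ∅ ω i (ω i) = 1 := by
      intro i; simp [cwf]
    simp [this]
  · intro σ hσ
    have : ∃ i, σ i ≠ ω i := by
      by_contra h
      push_neg at h
      exact hσ (funext h)
    obtain ⟨i, hi⟩ := this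
    rw [prod_eq_zero (mem_univ i), zero_mul]
    simp [cwf, hi]

lemma EE_univ (f : (∀ i, Ω i) → ℝ) (ω : ∀ i, Ω i) :
    EE ν univ f ω = ∑ σ : ∀ i, Ω i, (∏ i, ν i (σ i)) * f σ := by
  unfold EE cwf
  simp

lemma EE_mono (hν : ∀ i, (∀ a, 0 ≤ ν i a) ∧ ∑ a, ν i a = 1)
    (A : Finset (Fin n)) {f g : (∀ i, Ω i) → ℝ} (h : ∀ σ, f σ ≤ g σ) (ω : ∀ i, Ω i) :
    EE ν A f ω ≤ EE ν A g ω :=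
  sum_le_sum fun σ _ => mul_le_mul_of_nonneg_left (h σ) (cw_nonneg hν A ω σ)

lemma EE_insert (hν : ∀ i, (∀ a, 0 ≤ ν i a) ∧ ∑ a, ν i a = 1)
    {a : Fin n} {A : Finset (Fin n)} (ha : a ∉ A) (f : (∀ i, Ω i) → ℝ) (ω : ∀ i, Ω i) :
    EE ν (insert a A) f ω = EE ν A (fun τ => ∑ x, ν a x * f (Function.update τ a x)) ω := by
  classical
  unfold EE
  -- claim : pull apart coordinate a
  have claim : ∀ τ : ∀ i, Ω i,
      (∑ x, ∏ i, cwf ν A ω i (Function.update τ a x i)) * ν a (τ a)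
        = ∏ i, cwf ν (insert a A) ω i (τ i) := by
    intro τ
    have h1 : ∀ x : Ω a, ∏ i, cwf ν A ω i (Function.update τ a x i)
        = cwf ν A ω a x * ∏ i ∈ univ.erase a, cwf ν A ω i (τ i) := by
      intro x
      rw [← mul_prod_erase univ _ (mem_univ a)]
      congr 1
      · rw [Function.update_self]
      · refine prod_congr rfl fun i hi => ?_
        rw [Function.update_of_ne (mem_erase.1 hi).1]
    have h2 : ∀ x : Ω a, cwf ν A ω a x = if x = ω a then 1 else 0 := by
      intro x; simp [cwf, ha]
    simp only [h1, h2, ← sum_mul, ite_mul, one_mul, zero_mul]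
    rw [sum_ite_eq' univ (ω a)]
    simp only [mem_univ, if_true]
    rw [← mul_prod_erase univ (fun i => cwf ν (insert a A) ω i (τ i)) (mem_univ a)]
    have h3 : cwf ν (insert a A) ω a (τ a) = ν a (τ a) := by simp [cwf]
    have h4 : ∀ i ∈ univ.erase a, cwf ν (insert a A) ω i (τ i) = cwf ν A ω i (τ i) := by
      intro i hi
      have : i ∈ insert a A ↔ i ∈ A := by
        simp [mem_insert, (mem_erase.1 hi).1]
      simp only [cwf, this]
    rw [prod_congr rfl h4, h3]
    ring
  -- unfold RHS into a double sum, reindex by an involution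
  have rhs : ∑ τ : ∀ i, Ω i, (∏ i, cwf ν A ω i (τ i)) * ∑ x, ν a x * f (Function.update τ a x)
      = ∑ p : (∀ i, Ω i) × Ω a,
          (∏ i, cwf ν A ω i (p.1 i)) * (ν a p.2 * f (Function.update p.1 a p.2)) := by
    rw [Fintype.sum_prod_type]
    exact sum_congr rfl fun τ _ => by rw [mul_sum]
  set F : (∀ i, Ω i) × Ω a → (∀ i, Ω i) × Ω a :=
    fun p => (Function.update p.1 a p.2, p.1 a) with hF
  have hFinv : Function.Involutive F := by
    intro p
    simp only [hF, Function.update_self, Function.update_idem, Function.update_eq_self]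
  have hreindex : ∑ p : (∀ i, Ω i) × Ω a,
      (∏ i, cwf ν A ω i (p.1 i)) * (ν a p.2 * f (Function.update p.1 a p.2))
      = ∑ p : (∀ i, Ω i) × Ω a,
        (∏ i, cwf ν A ω i (Function.update p.1 a p.2 i)) * (ν a (p.1 a) * f p.1) := by
    rw [← Function.Bijective.sum_comp hFinv.bijective
      (fun q => (∏ i, cwf ν A ω i (q.1 i)) * (ν a q.2 * f (Function.update q.1 a q.2)))]
    refine sum_congr rfl fun p _ => ?_
    simp only [hF, Function.update_self, Function.update_idem, Function.update_eq_self]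
  rw [rhs, hreindex, Fintype.sum_prod_type]
  refine sum_congr rfl fun τ _ => ?_
  simp only
  rw [← sum_mul, ← claim τ]
  ring

lemma key_ineq (hν : ∀ i, (∀ a, 0 ≤ ν i a) ∧ ∑ a, ν i a = 1)
    (t : ℕ) (ht : 0 < t) (m : ℕ) (A : Finset (Fin n)) :
    ∀ (S : Fin m → Finset (Fin n)) (f : Fin m → (∀ i, Ω i) → ℝ),
      (∀ j σ, 0 ≤ f j σ) →
      (∀ j σ σ', (∀ i ∈ S j, σ i = σ' i) → f j σ = f j σ') →
      (∀ i : Fin n, (univ.filter (fun j => i ∈ S j)).card ≤ t) →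
      ∀ ω, EE ν A (fun σ => ∏ j, f j σ) ω
          ≤ ∏ j, (EE ν A (fun σ => f j σ ^ t) ω) ^ ((t:ℝ)⁻¹) := by
  have htR : (0:ℝ) < t := Nat.cast_pos.mpr ht
  have hpowinv : ∀ X : ℝ, 0 ≤ X → (X ^ ((t:ℝ)⁻¹)) ^ t = X := by
    intro X hX
    rw [← Real.rpow_natCast (X ^ ((t:ℝ)⁻¹)) t, ← Real.rpow_mul hX,
      inv_mul_cancel₀ htR.ne', Real.rpow_one]
  induction A using Finset.induction_on with
  | empty =>
    intro S f hf0 hdep hread ω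
    rw [EE_empty]
    refine le_of_eq (prod_congr rfl fun j _ => ?_).symm
    rw [EE_empty]
    rw [← Real.rpow_natCast (f j ω) t, ← Real.rpow_mul (hf0 j ω),
      mul_inv_cancel₀ htR.ne', Real.rpow_one]
  | @insert a B ha ih =>
    intro S f hf0 hdep hread ω
    set T : Finset (Fin m) := univ.filter (fun j => a ∈ S j) with hT
    set g : Fin m → (∀ i, Ω i) → ℝ := fun j τ =>
      if a ∈ S j then (∑ x, ν a x * f j (Function.update τ a x) ^ t) ^ ((t:ℝ)⁻¹)
      else f j τ with hg
    set S' : Fin m → Finset (Fin n) := fun j => (S j).erase a with hS'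
    have hsumnn : ∀ j τ, 0 ≤ ∑ x, ν a x * f j (Function.update τ a x) ^ t := fun j τ =>
      sum_nonneg fun x _ => mul_nonneg ((hν a).1 x) (pow_nonneg (hf0 j _) t)
    have hg0 : ∀ j τ, 0 ≤ g j τ := by
      intro j τ
      rw [hg]
      dsimp only
      split
      · exact Real.rpow_nonneg (hsumnn j τ) _
      · exact hf0 j τ
    have hgdep : ∀ j σ σ', (∀ i ∈ S' j, σ i = σ' i) → g j σ = g j σ' := by
      intro j σ σ' hagree
      rw [hg]
      dsimp only
      split
      · next hmem =>
        congr 1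
        refine sum_congr rfl fun x _ => ?_
        congr 1
        congr 1
        apply hdep
        intro i hi
        rcases eq_or_ne i a with rfl | hne
        · rw [Function.update_self, Function.update_self]
        · rw [Function.update_of_ne hne, Function.update_of_ne hne]
          exact hagree i (mem_erase.2 ⟨hne, hi⟩)
      · next hmem =>
        apply hdep
        intro i hi
        have hne : i ≠ a := fun h => hmem (h ▸ hi)
        exact hagree i (mem_erase.2 ⟨hne, hi⟩)
    have hread' : ∀ i : Fin n, (univ.filter (fun j => i ∈ S' j)).card ≤ t := by
      intro i
      refine le_trans (card_le_card ?_) (hread i)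
      intro j hj
      rw [mem_filter] at hj ⊢
      exact ⟨hj.1, mem_of_mem_erase hj.2⟩
    -- pointwise inequality
    have hpoint : ∀ τ, (∑ x, ν a x * ∏ j, f j (Function.update τ a x)) ≤ ∏ j, g j τ := by
      intro τ
      have hsplit : ∀ x : Ω a, ∏ j, f j (Function.update τ a x)
          = (∏ j ∈ T, f j (Function.update τ a x)) * ∏ j ∈ univ.filter (fun j => ¬ a ∈ S j), f j τ := by
        intro x
        rw [← prod_filter_mul_prod_filter_not univ (fun j => a ∈ S j)]
        congr 1
        refine prod_congr rfl fun j hj => ?_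
        apply hdep
        intro i hi
        have hne : i ≠ a := fun h => (mem_filter.1 hj).2 (h ▸ hi)
        rw [Function.update_of_ne hne]
      set C : ℝ := ∏ j ∈ univ.filter (fun j => ¬ a ∈ S j), f j τ with hC
      have hC0 : 0 ≤ C := prod_nonneg fun j _ => hf0 j τ
      have h1 : (∑ x, ν a x * ∏ j, f j (Function.update τ a x))
          = (∑ x, ν a x * ∏ j ∈ T, f j (Function.update τ a x)) * C := by
        rw [sum_mul]
        refine sum_congr rfl fun x _ => ?_
        rw [hsplit x]; ring
      rw [h1]
      have h2 := holder_w t ht (ν a) (hν a).1 (hν a).2 T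
        (by simpa [hT] using hread a) (fun j x => f j (Function.update τ a x))
        (fun j x => hf0 j _)
      have h3 : (∑ x, ν a x * ∏ j ∈ T, f j (Function.update τ a x)) * C
          ≤ (∏ j ∈ T, (∑ x, ν a x * f j (Function.update τ a x) ^ t) ^ ((t:ℝ)⁻¹)) * C :=
        mul_le_mul_of_nonneg_right h2 hC0
      refine h3.trans (le_of_eq ?_)
      rw [← prod_filter_mul_prod_filter_not univ (fun j => a ∈ S j) (fun j => g j τ)]
      congr 1
      · refine prod_congr rfl fun j hj => ?_
        rw [hg]
        dsimp only
        rw [if_pos (mem_filter.1 hj).2]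
      · refine prod_congr rfl fun j hj => ?_
        rw [hg]
        dsimp only
        rw [if_neg (mem_filter.1 hj).2]
    -- the per-j identity
    have hEEeq : ∀ j, EE ν B (fun τ => g j τ ^ t) ω
        = EE ν (insert a B) (fun σ => f j σ ^ t) ω := by
      intro j
      rw [EE_insert hν ha (fun σ => f j σ ^ t) ω]
      by_cases hmem : a ∈ S j
      · apply sum_congr rfl
        intro τ _
        congr 1
        rw [hg]
        dsimp only
        rw [if_pos hmem]
        exact hpowinv _ (hsumnn j τ)
      · apply sum_congr rfl
        intro τ _
        congr 1
        rw [hg]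
        dsimp only
        rw [if_neg hmem]
        have : ∀ x : Ω a, f j (Function.update τ a x) = f j τ := by
          intro x
          apply hdep
          intro i hi
          have hne : i ≠ a := fun h => hmem (h ▸ hi)
          rw [Function.update_of_ne hne]
        simp only [this]
        rw [← sum_mul, (hν a).2, one_mul]
    calc EE ν (insert a B) (fun σ => ∏ j, f j σ) ω
        = EE ν B (fun τ => ∑ x, ν a x * ∏ j, f j (Function.update τ a x)) ω := by
          rw [EE_insert hν ha]
      _ ≤ EE ν B (fun τ => ∏ j, g j τ) ω := EE_mono hν B hpoint ω
      _ ≤ ∏ j, (EE ν B (fun τ => g j τ ^ t) ω) ^ ((t:ℝ)⁻¹) :=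
          ih S' g hg0 hgdep hread' ω
      _ = ∏ j, (EE ν (insert a B) (fun σ => f j σ ^ t) ω) ^ ((t:ℝ)⁻¹) := by
          exact prod_congr rfl fun j _ => by rw [hEEeq j]

end EE

/-- Tail bound for read-`t` families (Gavinsky et al.): if `Z₁,…,Z_m` are
{0,1}-valued functions of independent random variables `X₁,…,X_n` where each
`X_i` affects at most `t` of the `Z_j`'s, and `Z = Z₁+⋯+Z_m`, then
`Pr[Z ≥ E[Z] + εm] ≤ exp(−2ε²m/t)`. -/
theorem stmt9 (n m t : ℕ) (ht : 0 < t)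
    (Ω : Fin n → Type) [∀ i, Fintype (Ω i)]
    (ν : ∀ i, Ω i → ℝ)
    (hν : ∀ i, (∀ a, 0 ≤ ν i a) ∧ ∑ a, ν i a = 1)
    (S : Fin m → Finset (Fin n))
    (Z : Fin m → (∀ i, Ω i) → ℝ)
    (hZ01 : ∀ j ω, Z j ω = 0 ∨ Z j ω = 1)
    (hdep : ∀ j ω ω', (∀ i ∈ S j, ω i = ω' i) → Z j ω = Z j ω')
    (hread : ∀ i, (univ.filter (fun j => i ∈ S j)).card ≤ t)
    (ε : ℝ) (hε : 0 < ε) :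
    (∑ ω : ∀ i, Ω i,
        if (∑ ω' : ∀ i, Ω i, (∏ i, ν i (ω' i)) * ∑ j, Z j ω') + ε * m ≤ ∑ j, Z j ω
        then ∏ i, ν i (ω i) else 0)
      ≤ Real.exp (-2 * ε^2 * m / t) := by
  classical
  have htR : (0:ℝ) < t := Nat.cast_pos.mpr ht
  set w : (∀ i, Ω i) → ℝ := fun σ => ∏ i, ν i (σ i) with hw
  have hw0 : ∀ σ, 0 ≤ w σ := fun σ => prod_nonneg fun i _ => (hν i).1 _
  have hw1 : ∑ σ, w σ = 1 := by
    rw [hw]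
    dsimp only
    rw [← Fintype.prod_sum (fun i x => ν i x)]
    calc ∏ i, ∑ x, ν i x = ∏ i : Fin n, (1:ℝ) := prod_congr rfl fun i _ => (hν i).2
      _ = 1 := prod_const_one
  have hZ0 : ∀ j σ, 0 ≤ Z j σ := by
    intro j σ; rcases hZ01 j σ with h | h <;> rw [h] <;> norm_num
  have hZ1 : ∀ j σ, Z j σ ≤ 1 := by
    intro j σ; rcases hZ01 j σ with h | h <;> rw [h] <;> norm_num
  set μ : ℝ := ∑ σ, w σ * ∑ j, Z j σ with hμ
  set P : Fin m → ℝ := fun j => ∑ σ, w σ * Z j σ with hP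
  have hμP : μ = ∑ j, P j := by
    rw [hμ, hP]
    simp only [mul_sum]
    rw [sum_comm]
  have hP0 : ∀ j, 0 ≤ P j := fun j => sum_nonneg fun σ _ => mul_nonneg (hw0 σ) (hZ0 j σ)
  have hP1 : ∀ j, P j ≤ 1 := by
    intro j
    rw [← hw1]
    exact sum_le_sum fun σ _ => by
      have := hZ1 j σ
      nlinarith [hw0 σ]
  set lam : ℝ := 4 * ε / t with hlam
  have hlam0 : 0 < lam := by positivity
  -- step 1: indicator ≤ exponential
  have step1 : (∑ ω : ∀ i, Ω i,
        if μ + ε * m ≤ ∑ j, Z j ω then w ω else 0)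
      ≤ ∑ σ, w σ * Real.exp (lam * (∑ j, Z j σ - μ - ε * m)) := by
    refine sum_le_sum fun σ _ => ?_
    split
    · next h =>
      have h1 : (1:ℝ) ≤ Real.exp (lam * (∑ j, Z j σ - μ - ε * m)) := by
        rw [← Real.exp_zero]
        apply Real.exp_le_exp.mpr
        have h0 : 0 ≤ ∑ j, Z j σ - μ - ε * m := by linarith
        exact mul_nonneg hlam0.le h0
      nlinarith [hw0 σ]
    · exact mul_nonneg (hw0 σ) (Real.exp_pos _).le
  -- step 2-3: rewrite exponential
  have step2 : ∀ σ, w σ * Real.exp (lam * (∑ j, Z j σ - μ - ε * m))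
      = Real.exp (-(lam * (μ + ε * m))) * (w σ * ∏ j, Real.exp (lam * Z j σ)) := by
    intro σ
    rw [← Real.exp_sum]
    have harg : lam * (∑ j, Z j σ - μ - ε * m)
        = (∑ j, lam * Z j σ) + -(lam * (μ + ε * m)) := by
      rw [← mul_sum]; ring
    rw [harg, Real.exp_add]
    ring
  have hne : ∀ i, Nonempty (Ω i) := by
    intro i
    by_contra h
    rw [not_nonempty_iff] at h
    have h2 := (hν i).2
    rw [univ_eq_empty, sum_empty] at h2
    norm_num at h2
  set ω₀ : ∀ i, Ω i := fun i => (hne i).some with hω₀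
  -- apply the key inequality
  have hf0' : ∀ j σ, 0 ≤ Real.exp (lam * Z j σ) := fun j σ => (Real.exp_pos _).le
  have hdep' : ∀ j σ σ', (∀ i ∈ S j, σ i = σ' i) →
      Real.exp (lam * Z j σ) = Real.exp (lam * Z j σ') := by
    intro j σ σ' h
    rw [hdep j σ σ' h]
  have keyapp := key_ineq hν t ht m univ S (fun j σ => Real.exp (lam * Z j σ))
    hf0' hdep' hread ω₀
  rw [EE_univ] at keyapp
  have keyapp2 : (∑ σ, w σ * ∏ j, Real.exp (lam * Z j σ))
      ≤ ∏ j, (∑ σ, w σ * (Real.exp (lam * Z j σ)) ^ t) ^ ((t:ℝ)⁻¹) := by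
    refine keyapp.trans (le_of_eq (prod_congr rfl fun j _ => ?_))
    rw [EE_univ]
  -- step 5 : compute the mgf of each Z j
  have step5 : ∀ j, ∑ σ, w σ * (Real.exp (lam * Z j σ)) ^ t
      = 1 - P j + P j * Real.exp (lam * t) := by
    intro j
    have hpt : ∀ σ, (Real.exp (lam * Z j σ)) ^ t
        = 1 + (Real.exp (lam * t) - 1) * Z j σ := by
      intro σ
      rcases hZ01 j σ with h | h
      · rw [h]; simp
      · rw [h]
        rw [mul_one, ← Real.exp_nat_mul, mul_one, mul_comm (t:ℝ) lam]
        ring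
    calc ∑ σ, w σ * (Real.exp (lam * Z j σ)) ^ t
        = ∑ σ, (w σ + (Real.exp (lam * t) - 1) * (w σ * Z j σ)) := by
          refine sum_congr rfl fun σ _ => ?_
          rw [hpt σ]; ring
      _ = 1 + (Real.exp (lam * t) - 1) * P j := by
          rw [sum_add_distrib, hw1, ← mul_sum, hP]
      _ = 1 - P j + P j * Real.exp (lam * t) := by ring
  -- step 6 : Hoeffding bound for each factor
  have step6 : ∀ j, (1 - P j + P j * Real.exp (lam * t)) ^ ((t:ℝ)⁻¹)
      ≤ Real.exp (P j * lam + lam ^ 2 * t / 8) := by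
    intro j
    have hbase0 : 0 ≤ 1 - P j + P j * Real.exp (lam * t) := by
      nlinarith [Real.exp_pos (lam * t), hP0 j, hP1 j]
    have hh := hoeffding_scalar (hP0 j) (hP1 j) (lam * t)
    calc (1 - P j + P j * Real.exp (lam * t)) ^ ((t:ℝ)⁻¹)
        ≤ (Real.exp (P j * (lam * t) + (lam * t) ^ 2 / 8)) ^ ((t:ℝ)⁻¹) :=
          Real.rpow_le_rpow hbase0 hh (by positivity)
      _ = Real.exp ((P j * (lam * t) + (lam * t) ^ 2 / 8) * (t:ℝ)⁻¹) := by
          rw [← Real.exp_mul]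
      _ = Real.exp (P j * lam + lam ^ 2 * t / 8) := by
          congr 1
          field_simp
  -- step 7 : combine the product
  have step7 : ∏ j, Real.exp (P j * lam + lam ^ 2 * t / 8)
      = Real.exp (lam * μ + m * (lam ^ 2 * t / 8)) := by
    rw [← Real.exp_sum]
    congr 1
    rw [sum_add_distrib, ← sum_mul, ← hμP, sum_const, card_univ, Fintype.card_fin,
      nsmul_eq_mul]
    ring
  -- put everything together
  have chain : (∑ ω : ∀ i, Ω i,
        if μ + ε * m ≤ ∑ j, Z j ω then w ω else 0)
      ≤ Real.exp (-(lam * (μ + ε * m))) * Real.exp (lam * μ + m * (lam ^ 2 * t / 8)) := by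
    refine step1.trans ?_
    calc ∑ σ, w σ * Real.exp (lam * (∑ j, Z j σ - μ - ε * m))
        = Real.exp (-(lam * (μ + ε * m))) * ∑ σ, w σ * ∏ j, Real.exp (lam * Z j σ) := by
          rw [mul_sum]
          exact sum_congr rfl fun σ _ => step2 σ
      _ ≤ Real.exp (-(lam * (μ + ε * m))) *
            ∏ j, (∑ σ, w σ * (Real.exp (lam * Z j σ)) ^ t) ^ ((t:ℝ)⁻¹) :=
          mul_le_mul_of_nonneg_left keyapp2 (Real.exp_pos _).le
      _ ≤ Real.exp (-(lam * (μ + ε * m))) * ∏ j, Real.exp (P j * lam + lam ^ 2 * t / 8) := by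
          refine mul_le_mul_of_nonneg_left ?_ (Real.exp_pos _).le
          refine prod_le_prod (fun j _ => ?_) (fun j _ => ?_)
          · refine Real.rpow_nonneg ?_ _
            exact sum_nonneg fun σ _ => mul_nonneg (hw0 σ) (pow_nonneg (Real.exp_pos _).le t)
          · rw [step5 j]
            exact step6 j
      _ = Real.exp (-(lam * (μ + ε * m))) * Real.exp (lam * μ + m * (lam ^ 2 * t / 8)) := by
          rw [step7]
  have hfinal : Real.exp (-(lam * (μ + ε * m))) * Real.exp (lam * μ + m * (lam ^ 2 * t / 8))
      = Real.exp (-2 * ε ^ 2 * m / t) := by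
    rw [← Real.exp_add]
    congr 1
    rw [hlam]
    field_simp
    ring
  have hgoal : (∑ ω : ∀ i, Ω i,
      if (∑ ω' : ∀ i, Ω i, (∏ i, ν i (ω' i)) * ∑ j, Z j ω') + ε * m ≤ ∑ j, Z j ω
      then ∏ i, ν i (ω i) else 0)
      = (∑ ω : ∀ i, Ω i, if μ + ε * m ≤ ∑ j, Z j ω then w ω else 0) := rfl
  rw [hgoal]
  rw [← hfinal]
  exact chain
end

section
/- Let M be a random m×n matrix over GF(2) with i.i.d. entries that are 1 with probability p ≤ 1/2, let S₀ ⊆ {0,1}^n with |S₀| = 2^k, and let Y be uniform on S₀. Then for every T ⊆ [m] with |T| ≥ t, |E_{M,Y}[(−1)^{Σ_{i∈T} M_i Y}]| ≤ (1 + (1−2p)^t)^n / 2^k ≤ e^{n·e^{−2pt}} / 2^k. -/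
open Finset
open scoped Classical

/-- The character `(−1)^z` of GF(2). -/
noncomputable def chi (z : ZMod 2) : ℝ := if z = 0 then 1 else -1

lemma chi_zero : chi 0 = 1 := by simp [chi]

lemma chi_add (a b : ZMod 2) : chi (a + b) = chi a * chi b := by
  have H : ∀ x : ZMod 2, x = 0 ∨ x = 1 := by decide
  rcases H a with h | h <;> rcases H b with h' | h' <;>
    subst h <;> subst h' <;>
      simp [chi, show ((1:ZMod 2) + 1) = 0 from by decide, one_ne_zero]

lemma chi_sum {ι : Type*} (s : Finset ι) (f : ι → ZMod 2) :
    chi (∑ x ∈ s, f x) = ∏ x ∈ s, chi (f x) := by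
  classical
  induction s using Finset.cons_induction with
  | empty => simp [chi_zero]
  | cons a s ha ih => rw [Finset.sum_cons, Finset.prod_cons, chi_add, ih]

lemma sum_zmod2 (f : ZMod 2 → ℝ) : ∑ x : ZMod 2, f x = f 0 + f 1 := by
  have : (Finset.univ : Finset (ZMod 2)) = {0, 1} := by decide
  rw [this, Finset.sum_insert (by decide), Finset.sum_singleton]

lemma key (m n : ℕ) (p : ℝ) (T : Finset (Fin m)) (y : Fin n → ZMod 2) :
    (∑ M : Matrix (Fin m) (Fin n) (ZMod 2),
        (∏ i, ∏ j, if M i j = 1 then p else 1 - p) *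
          chi (∑ i ∈ T, ∑ j, M i j * y j))
      = ∏ i ∈ T, ∏ j, (if y j = 0 then (1:ℝ) else 1 - 2*p) := by
  classical
  set g : Fin m → Fin n → ZMod 2 → ℝ := fun i j x =>
    (if x = 1 then p else 1 - p) * (if i ∈ T then chi (x * y j) else 1) with hg
  have step1 : ∀ M : Matrix (Fin m) (Fin n) (ZMod 2),
      (∏ i, ∏ j, if M i j = 1 then p else 1 - p) * chi (∑ i ∈ T, ∑ j, M i j * y j)
      = ∏ i, ∏ j, g i j (M i j) := by
    intro M
    have h1 : chi (∑ i ∈ T, ∑ j, M i j * y j)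
        = ∏ i : Fin m, (if i ∈ T then chi (∑ j, M i j * y j) else 1) := by
      rw [chi_sum, Finset.prod_ite_mem, Finset.univ_inter]
    rw [h1, ← Finset.prod_mul_distrib]
    refine Finset.prod_congr rfl fun i _ => ?_
    by_cases hi : i ∈ T
    · simp only [hi, if_true, hg]
      rw [chi_sum, ← Finset.prod_mul_distrib]
    · simp only [hi, if_false, mul_one, hg]
  simp only [step1]
  have h2 : (∑ M : Matrix (Fin m) (Fin n) (ZMod 2), ∏ i, ∏ j, g i j (M i j))
      = ∏ i, ∑ r ∈ (Finset.univ : Finset (Fin n → ZMod 2)), ∏ j, g i j (r j) := by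
    rw [Finset.prod_univ_sum (fun _ : Fin m => (Finset.univ : Finset (Fin n → ZMod 2)))
      (fun i r => ∏ j, g i j (r j)), Fintype.piFinset_univ]
    rfl
  rw [h2]
  have h3 : ∀ i, (∑ r ∈ (Finset.univ : Finset (Fin n → ZMod 2)), ∏ j, g i j (r j))
      = ∏ j, ∑ x : ZMod 2, g i j x := by
    intro i
    rw [Finset.prod_univ_sum (fun _ : Fin n => (Finset.univ : Finset (ZMod 2)))
      (fun j x => g i j x), Fintype.piFinset_univ]
  have h4 : ∀ i j, (∑ x : ZMod 2, g i j x)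
      = if i ∈ T then (if y j = 0 then (1:ℝ) else 1 - 2*p) else 1 := by
    intro i j
    rw [sum_zmod2]
    by_cases hi : i ∈ T <;> by_cases hy : y j = 0 <;>
      simp [hg, hi, hy, chi] <;> ring
  calc (∏ i, ∑ r ∈ (Finset.univ : Finset (Fin n → ZMod 2)), ∏ j, g i j (r j))
      = ∏ i : Fin m, (if i ∈ T then ∏ j, (if y j = 0 then (1:ℝ) else 1 - 2*p) else 1) := by
        refine Finset.prod_congr rfl fun i _ => ?_
        rw [h3]
        by_cases hi : i ∈ T
        · simp only [hi, if_true]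
          exact Finset.prod_congr rfl fun j _ => by rw [h4, if_pos hi]
        · simp only [hi, if_false]
          rw [Finset.prod_congr rfl fun j _ => by rw [h4, if_neg hi], Finset.prod_const_one]
    _ = ∏ i ∈ T, ∏ j, (if y j = 0 then (1:ℝ) else 1 - 2*p) := by
        rw [Finset.prod_ite_mem, Finset.univ_inter]

/-- For a random `m×n` GF(2) matrix `M` with i.i.d. Bernoulli(p) entries
(`p ≤ 1/2`), `Y` uniform on `S₀` of size `2^k`, and `T ⊆ [m]` with `|T| ≥ t`,
`|E_{M,Y}[(−1)^{Σ_{i∈T} M_i Y}]| ≤ (1+(1−2p)^t)^n/2^k ≤ e^{n·e^{−2pt}}/2^k`. -/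
theorem stmt13 (m n k t : ℕ) (p : ℝ) (hp0 : 0 ≤ p) (hp : p ≤ 1/2)
    (S₀ : Finset (Fin n → ZMod 2)) (hS : S₀.card = 2^k)
    (T : Finset (Fin m)) (hT : t ≤ T.card) :
    |∑ M : Matrix (Fin m) (Fin n) (ZMod 2),
        (∏ i, ∏ j, if M i j = 1 then p else 1 - p) *
          ((S₀.card : ℝ)⁻¹ * ∑ y ∈ S₀, chi (∑ i ∈ T, ∑ j, M i j * y j))|
      ≤ (1 + (1 - 2*p)^t)^n / 2^k
    ∧ (1 + (1 - 2*p)^t)^n / 2^k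
      ≤ Real.exp (n * Real.exp (-2*p*t)) / 2^k := by
  have h2p : 0 ≤ 1 - 2*p := by linarith
  have h2p1 : 1 - 2*p ≤ 1 := by linarith
  set c : ℝ := (S₀.card : ℝ)⁻¹ with hc
  set E : (Fin n → ZMod 2) → ℝ := fun y => ∏ j, (if y j = 0 then (1:ℝ) else 1 - 2*p)
    with hE
  have hE0 : ∀ y, 0 ≤ E y := fun y =>
    Finset.prod_nonneg fun j _ => by split <;> [norm_num; exact h2p]
  have hE1 : ∀ y, E y ≤ 1 := fun y =>
    Finset.prod_le_one (fun j _ => by split <;> [norm_num; exact h2p])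
      (fun j _ => by split <;> [norm_num; exact h2p1])
  have hswap : (∑ M : Matrix (Fin m) (Fin n) (ZMod 2),
        (∏ i, ∏ j, if M i j = 1 then p else 1 - p) *
          (c * ∑ y ∈ S₀, chi (∑ i ∈ T, ∑ j, M i j * y j)))
      = c * ∑ y ∈ S₀, E y ^ T.card := by
    calc (∑ M : Matrix (Fin m) (Fin n) (ZMod 2),
        (∏ i, ∏ j, if M i j = 1 then p else 1 - p) *
          (c * ∑ y ∈ S₀, chi (∑ i ∈ T, ∑ j, M i j * y j)))
        = ∑ M : Matrix (Fin m) (Fin n) (ZMod 2), ∑ y ∈ S₀,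
            c * ((∏ i, ∏ j, if M i j = 1 then p else 1 - p) *
              chi (∑ i ∈ T, ∑ j, M i j * y j)) := by
          refine Finset.sum_congr rfl fun M _ => ?_
          rw [Finset.mul_sum, Finset.mul_sum]
          exact Finset.sum_congr rfl fun y _ => by ring
      _ = ∑ y ∈ S₀, c * ∑ M : Matrix (Fin m) (Fin n) (ZMod 2),
            ((∏ i, ∏ j, if M i j = 1 then p else 1 - p) *
              chi (∑ i ∈ T, ∑ j, M i j * y j)) := by
          rw [Finset.sum_comm]
          exact Finset.sum_congr rfl fun y _ => (Finset.mul_sum _ _ _).symm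
      _ = c * ∑ y ∈ S₀, E y ^ T.card := by
          rw [Finset.mul_sum]
          refine Finset.sum_congr rfl fun y _ => ?_
          rw [key m n p T y, Finset.prod_const]
  have hc0 : 0 ≤ c := inv_nonneg.mpr (Nat.cast_nonneg _)
  have hsum_bound : (∑ y ∈ S₀, E y ^ T.card) ≤ (1 + (1 - 2*p)^t)^n := by
    calc (∑ y ∈ S₀, E y ^ T.card) ≤ ∑ y ∈ S₀, E y ^ t :=
          Finset.sum_le_sum fun y _ => pow_le_pow_of_le_one (hE0 y) (hE1 y) hT
      _ ≤ ∑ y : Fin n → ZMod 2, E y ^ t := by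
          refine Finset.sum_le_sum_of_subset_of_nonneg (Finset.subset_univ _)
            fun y _ _ => pow_nonneg (hE0 y) t
      _ = (1 + (1 - 2*p)^t)^n := by
          have : ∀ y : Fin n → ZMod 2, E y ^ t
              = ∏ j, (if y j = 0 then (1:ℝ) else 1 - 2*p) ^ t := by
            intro y; rw [hE]; exact Finset.prod_pow _ _ _ |>.symm
          simp only [this]
          rw [← Fintype.piFinset_univ, ← Finset.prod_univ_sum
            (fun _ : Fin n => (Finset.univ : Finset (ZMod 2)))
            (fun j x => (if x = 0 then (1:ℝ) else 1 - 2*p) ^ t)]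
          have hsum : (∑ x : ZMod 2, (if x = 0 then (1:ℝ) else 1 - 2*p) ^ t)
              = 1 + (1 - 2*p)^t := by
            rw [sum_zmod2 (fun x => (if x = 0 then (1:ℝ) else 1 - 2*p) ^ t)]
            simp
          rw [Finset.prod_congr rfl fun j _ => hsum, Finset.prod_const,
            Finset.card_univ, Fintype.card_fin]
  constructor
  · rw [hswap, abs_of_nonneg (mul_nonneg hc0
      (Finset.sum_nonneg fun y _ => pow_nonneg (hE0 y) _))]
    have : c * (∑ y ∈ S₀, E y ^ T.card) ≤ c * (1 + (1 - 2*p)^t)^n :=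
      mul_le_mul_of_nonneg_left hsum_bound hc0
    refine this.trans_eq ?_
    rw [hc, hS]
    push_cast
    rw [mul_comm, div_eq_mul_inv]
  · have h1 : (1 - 2*p)^t ≤ Real.exp (-2*p*t) := by
      have hb : 1 - 2*p ≤ Real.exp (-(2*p)) := by
        have := Real.add_one_le_exp (-(2*p)); linarith
      calc (1 - 2*p)^t ≤ (Real.exp (-(2*p)))^t := pow_le_pow_left₀ h2p hb t
        _ = Real.exp (-2*p*t) := by rw [← Real.exp_nat_mul]; congr 1; ring
    have h2 : (1 + (1 - 2*p)^t)^n ≤ Real.exp (n * Real.exp (-2*p*t)) := by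
      calc (1 + (1 - 2*p)^t)^n ≤ (Real.exp (Real.exp (-2*p*t)))^n := by
            apply pow_le_pow_left₀ (by positivity)
            have := Real.add_one_le_exp (Real.exp (-2*p*t))
            linarith
        _ = Real.exp (n * Real.exp (-2*p*t)) := (Real.exp_nat_mul _ n).symm
    gcongr
end
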